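/- The unitary Cayley graph of ℤ/4ℤ (the 4-cycle) does not have quantum fractional revival from vertex 0 to vertex 1 at any time t ∈ ℝ. -/

import Mathlib

open Matrix

lemma exp_submatrix {n : Type*} [Fintype n] [DecidableEq n] (e : n ≃ n) (A : Matrix n n ℂ) :
    NormedSpace.exp (A.submatrix e e) = (NormedSpace.exp A).submatrix e e := by
  letI : SeminormedRing (Matrix n n ℂ) := Matrix.linftyOpSemiNormedRing
  letI : NormedRing (Matrix n n ℂ) := Matrix.linftyOpNormedRing
  letI : NormedAlgebra ℂ (Matrix n n ℂ) := Matrix.linftyOpNormedAlgebra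
  letI : NormedAlgebra ℚ (Matrix n n ℂ) := NormedAlgebra.restrictScalars ℚ ℂ _
  have hc : Continuous ((Matrix.reindexAlgEquiv ℂ ℂ e.symm : Matrix n n ℂ ≃ₐ[ℂ] Matrix n n ℂ) :
      Matrix n n ℂ → Matrix n n ℂ) := by
    have : ((Matrix.reindexAlgEquiv ℂ ℂ e.symm : Matrix n n ℂ ≃ₐ[ℂ] Matrix n n ℂ) :
        Matrix n n ℂ → Matrix n n ℂ) = fun M => M.submatrix e e := by
      funext M
      simp [Matrix.reindexAlgEquiv_apply, Matrix.reindex_apply]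
    rw [this]
    exact continuous_id.matrix_submatrix _ _
  have h := NormedSpace.map_exp
    (Matrix.reindexAlgEquiv ℂ ℂ e.symm : Matrix n n ℂ ≃ₐ[ℂ] Matrix n n ℂ) hc A
  simp only [Matrix.reindexAlgEquiv_apply, Matrix.reindex_apply, Equiv.symm_symm] at h
  exact h.symm

/-- The standard basis vector `e_u` in `ℂ^V`. -/
noncomputable def stdVec {V : Type*} (u : V) : V → ℂ :=
  letI := Classical.decEq V
  Pi.single u 1

lemma stdVec_same {V : Type*} (u : V) : stdVec u u = 1 := by
  unfold stdVec
  simp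

lemma stdVec_ne {V : Type*} {u j : V} (h : j ≠ u) : stdVec u j = 0 := by
  unfold stdVec
  simp [Pi.single_apply, h]

/-- The transition matrix `H(t) = exp(i t A)` of a graph with adjacency matrix `A`. -/
noncomputable def transMatrix {V : Type*} [Fintype V] (A : Matrix V V ℂ) (t : ℝ) :
    Matrix V V ℂ :=
  letI := Classical.decEq V
  NormedSpace.exp ((Complex.I * (t : ℂ)) • A)

/-- Quantum fractional revival from `u` to `v` at time `t`. -/
def hasQFR {V : Type*} [Fintype V] (A : Matrix V V ℂ) (u v : V) (t : ℝ) : Prop :=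
  u ≠ v ∧ ∃ α β : ℂ, β ≠ 0 ∧
    (transMatrix A t) *ᵥ stdVec u = α • stdVec u + β • stdVec v

/-- The unitary Cayley graph of a commutative ring: distinct `a, b` are adjacent
iff `a - b` is a unit. -/
def unitaryCayleyGraph (R : Type*) [CommRing R] : SimpleGraph R where
  Adj a b := a ≠ b ∧ IsUnit (a - b)
  symm := by
    refine ⟨?_⟩
    rintro a b ⟨h1, h2⟩
    refine ⟨h1.symm, ?_⟩
    rw [← neg_sub]
    exact h2.neg
  loopless := ⟨fun a h => h.1 rfl⟩

/-- The adjacency matrix (over `ℂ`) of the unitary Cayley graph of `R`. -/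
noncomputable def ucMatrix (R : Type*) [CommRing R] : Matrix R R ℂ :=
  letI := Classical.decEq R
  letI := Classical.decRel (unitaryCayleyGraph R).Adj
  (unitaryCayleyGraph R).adjMatrix ℂ

/-- The adjacency matrix (over `ℂ`) of a simple graph. -/
noncomputable def adjMat {V : Type*} (G : SimpleGraph V) : Matrix V V ℂ :=
  letI := Classical.decEq V
  letI := Classical.decRel G.Adj
  G.adjMatrix ℂ

lemma uc_submatrix_neg (R : Type*) [CommRing R] :
    (ucMatrix R).submatrix (Equiv.neg R) (Equiv.neg R) = ucMatrix R := by
  classical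
  ext a b
  unfold ucMatrix
  simp only [Matrix.submatrix_apply, Equiv.neg_apply]
  rw [SimpleGraph.adjMatrix_apply, SimpleGraph.adjMatrix_apply]
  have : (unitaryCayleyGraph R).Adj (-a) (-b) ↔ (unitaryCayleyGraph R).Adj a b := by
    show (-a ≠ -b ∧ IsUnit (-a - -b)) ↔ (a ≠ b ∧ IsUnit (a - b))
    constructor
    · rintro ⟨h1, h2⟩
      refine ⟨fun h => h1 (by rw [h]), ?_⟩
      have : -a - -b = -(a - b) := by ring
      rw [this] at h2
      exact (IsUnit.neg_iff _).mp h2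
    · rintro ⟨h1, h2⟩
      refine ⟨fun h => h1 (neg_inj.mp h), ?_⟩
      have : -a - -b = -(a - b) := by ring
      rw [this]
      exact h2.neg
  exact if_congr this rfl rfl

lemma trans_symm (t : ℝ) :
    ∀ a b : ZMod 4, transMatrix (ucMatrix (ZMod 4)) t (-a) (-b)
      = transMatrix (ucMatrix (ZMod 4)) t a b := by
  intro a b
  have key : (transMatrix (ucMatrix (ZMod 4)) t).submatrix (Equiv.neg (ZMod 4))
      (Equiv.neg (ZMod 4)) = transMatrix (ucMatrix (ZMod 4)) t := by
    unfold transMatrix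
    rw [← @exp_submatrix (ZMod 4) _ (Classical.decEq _) (Equiv.neg (ZMod 4))
      ((Complex.I * (t : ℂ)) • ucMatrix (ZMod 4))]
    congr 1
    calc ((Complex.I * (t : ℂ)) • ucMatrix (ZMod 4)).submatrix (Equiv.neg (ZMod 4))
          (Equiv.neg (ZMod 4))
        = (Complex.I * (t : ℂ)) • ((ucMatrix (ZMod 4)).submatrix (Equiv.neg (ZMod 4))
          (Equiv.neg (ZMod 4))) := rfl
      _ = (Complex.I * (t : ℂ)) • ucMatrix (ZMod 4) := by rw [uc_submatrix_neg]
  calc transMatrix (ucMatrix (ZMod 4)) t (-a) (-b)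
      = ((transMatrix (ucMatrix (ZMod 4)) t).submatrix (Equiv.neg (ZMod 4))
          (Equiv.neg (ZMod 4))) a b := rfl
    _ = transMatrix (ucMatrix (ZMod 4)) t a b := by rw [key]

/-- the unitary Cayley graph of `ℤ/4` has no QFR from `0` to `1`
at any time. -/
theorem no_qfr_zmod_four_adjacent (t : ℝ) :
    ¬ hasQFR (ucMatrix (ZMod 4)) (0 : ZMod 4) (1 : ZMod 4) t := by
  rintro ⟨-, α, β, hβ, heq⟩
  set H := transMatrix (ucMatrix (ZMod 4)) t with hH
  have hs00 : stdVec (0 : ZMod 4) 0 = 1 := stdVec_same 0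
  have hsne : ∀ j : ZMod 4, j ≠ 0 → stdVec (0 : ZMod 4) j = 0 :=
    fun j hj => stdVec_ne hj
  have hs11 : stdVec (1 : ZMod 4) 1 = 1 := stdVec_same 1
  have hs01 : stdVec (0 : ZMod 4) 1 = 0 := hsne 1 (by decide)
  have hs03 : stdVec (0 : ZMod 4) 3 = 0 := hsne 3 (by decide)
  have hs13 : stdVec (1 : ZMod 4) 3 = 0 := stdVec_ne (by decide)
  have hmv : ∀ i : ZMod 4, (H *ᵥ stdVec (0 : ZMod 4)) i = H i 0 := by
    intro i
    show (∑ j, H i j * stdVec (0 : ZMod 4) j) = H i 0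
    rw [Finset.sum_eq_single 0 (fun j _ hj => by rw [hsne j hj, mul_zero])
      (by intro h; exact absurd (Finset.mem_univ 0) h), hs00, mul_one]
  have h1 : (H *ᵥ stdVec (0 : ZMod 4)) 1 = β := by
    rw [heq]
    show α * stdVec (0 : ZMod 4) 1 + β * stdVec (1 : ZMod 4) 1 = β
    rw [hs01, hs11, mul_zero, mul_one, zero_add]
  have h3 : (H *ᵥ stdVec (0 : ZMod 4)) 3 = 0 := by
    rw [heq]
    show α * stdVec (0 : ZMod 4) 3 + β * stdVec (1 : ZMod 4) 3 = 0
    rw [hs03, hs13, mul_zero, mul_zero, zero_add]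
  have hsym : H 3 0 = H 1 0 := by
    have := trans_symm t 1 0
    rw [hH]
    rw [show (3 : ZMod 4) = -1 by decide, show (0 : ZMod 4) = -0 from (neg_zero).symm] at *
    exact this
  rw [hmv 1] at h1
  rw [hmv 3] at h3
  rw [hsym, h1] at h3
  exact hβ h3
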